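/- arXiv:2307.02373 — 2 statements merged into one kernel-verified Lean document; each statement's English description precedes it below -/
import Mathlib

section
/- The strong metric dimension of the Petersen graph is 8. -/
open SimpleGraph

variable {V : Type*} {W : Type*}

/-- `x` lies on some `y`–`z` geodesic in `G`. -/
def LiesOnGeodesic (G : SimpleGraph V) (x y z : V) : Prop :=
  G.dist y x + G.dist x z = G.dist y z

/-- A strong resolving set of `G`. -/
def IsStrongResolvingSet (G : SimpleGraph V) (S : Set V) : Prop :=
  ∀ x y : V, x ≠ y → ∃ z ∈ S,
    LiesOnGeodesic G x y z ∨ LiesOnGeodesic G y x z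

/-- The strong metric dimension of a finite graph. -/
noncomputable def sdim (G : SimpleGraph V) [Fintype V] : ℕ :=
  sInf {n : ℕ | ∃ S : Finset V, S.card = n ∧ IsStrongResolvingSet G ↑S}

/-- `u` is maximally distant from `v` in `G`. -/
def MaxDistFrom (G : SimpleGraph V) (u v : V) : Prop :=
  ∀ w : V, G.Adj u w → G.dist w v ≤ G.dist u v

/-- `u` and `v` are mutually maximally distant in `G`. -/
def MutMaxDist (G : SimpleGraph V) (u v : V) : Prop :=
  MaxDistFrom G u v ∧ MaxDistFrom G v u

/-- The strong resolving graph of `G` (on the full vertex set; vertices not in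
any MMD pair are isolated). -/
def srGraph (G : SimpleGraph V) : SimpleGraph V where
  Adj u v := u ≠ v ∧ MutMaxDist G u v
  symm := ⟨by
    rintro u v ⟨h, h1, h2⟩
    exact ⟨h.symm, h2, h1⟩⟩
  loopless := ⟨by rintro v ⟨h, -⟩; exact h rfl⟩

/-- The Petersen graph as the Kneser graph `K(5,2)`. -/
def petersenGraph : SimpleGraph {s : Finset (Fin 5) // s.card = 2} where
  Adj a b := Disjoint a.val b.val
  symm := ⟨fun _ _ h => h.symm⟩
  loopless := ⟨by
    intro a h
    have h2 : a.val = ∅ := disjoint_self.mp h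
    have := a.property
    rw [h2] at this
    simp at this⟩

abbrev PV := {s : Finset (Fin 5) // s.card = 2}

lemma pv_common : ∀ a b : PV, a ≠ b → ¬ Disjoint a.1 b.1 →
    ∃ c : PV, Disjoint a.1 c.1 ∧ Disjoint c.1 b.1 := by decide

lemma pv_no_three : ∀ a b c : PV, a ≠ b → a ≠ c → b ≠ c →
    ¬ (Disjoint a.1 b.1 ∧ Disjoint a.1 c.1 ∧ Disjoint b.1 c.1) := by decide

lemma pv_card : Fintype.card PV = 10 := by decide

lemma pet_dist_one {a b : PV} (h : Disjoint a.1 b.1) : petersenGraph.dist a b = 1 :=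
  SimpleGraph.dist_eq_one_iff_adj.mpr h

lemma pet_dist_two {a b : PV} (hne : a ≠ b) (h : ¬ Disjoint a.1 b.1) :
    petersenGraph.dist a b = 2 := by
  obtain ⟨c, hac, hcb⟩ := pv_common a b hne h
  have hw : petersenGraph.Walk a b :=
    ((show petersenGraph.Adj a c from hac).toWalk).append ((show petersenGraph.Adj c b from hcb).toWalk)
  have hle : petersenGraph.dist a b ≤ 2 := by
    have h := SimpleGraph.dist_le (((show petersenGraph.Adj a c from hac).toWalk).append
      ((show petersenGraph.Adj c b from hcb).toWalk))
    simpa [SimpleGraph.Walk.length_append] using h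
  have h0 : petersenGraph.dist a b ≠ 0 := by
    intro h0
    rcases SimpleGraph.dist_eq_zero_iff_eq_or_not_reachable.mp h0 with h1 | h1
    · exact hne h1
    · exact h1 ⟨hw⟩
  have h1 : petersenGraph.dist a b ≠ 1 := fun h1 =>
    h (SimpleGraph.dist_eq_one_iff_adj.mp h1)
  omega

lemma pet_dist_le_two (a b : PV) : petersenGraph.dist a b ≤ 2 := by
  by_cases he : a = b
  · subst he; rw [SimpleGraph.dist_self]; omega
  by_cases hd : Disjoint a.1 b.1
  · rw [pet_dist_one hd]; omega
  · rw [pet_dist_two he hd]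

lemma pet_dist_zero {a b : PV} (h : petersenGraph.dist a b = 0) : a = b := by
  by_contra hne
  by_cases hd : Disjoint a.1 b.1
  · rw [pet_dist_one hd] at h; omega
  · rw [pet_dist_two hne hd] at h; omega

lemma geo_self (G : SimpleGraph V) (x y : V) : LiesOnGeodesic G x y x := by
  show G.dist y x + G.dist x x = G.dist y x
  rw [SimpleGraph.dist_self, add_zero]

-- explicit vertices
def pa : PV := ⟨{0, 1}, by decide⟩
def pb : PV := ⟨{2, 3}, by decide⟩
def pc : PV := ⟨{2, 4}, by decide⟩

def S₀ : Finset PV := Finset.univ \ {pa, pb}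

lemma S₀_card : S₀.card = 8 := by decide

lemma S₀_srs : IsStrongResolvingSet petersenGraph (↑S₀ : Set PV) := by
  intro x y hxy
  by_cases hx : x ∈ S₀
  · exact ⟨x, by exact_mod_cast hx, Or.inl (geo_self _ _ _)⟩
  by_cases hy : y ∈ S₀
  · exact ⟨y, by exact_mod_cast hy, Or.inr (geo_self _ _ _)⟩
  -- both x and y are in {pa, pb}
  have hx' : x = pa ∨ x = pb := by
    rw [or_iff_not_imp_left]
    simpa [S₀, Finset.mem_sdiff] using hx
  have hy' : y = pa ∨ y = pb := by
    rw [or_iff_not_imp_left]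
    simpa [S₀, Finset.mem_sdiff] using hy
  have hcS : pc ∈ S₀ := by decide
  have hgeo : LiesOnGeodesic petersenGraph pa pb pc := by
    show petersenGraph.dist pb pa + petersenGraph.dist pa pc = petersenGraph.dist pb pc
    rw [pet_dist_one (by decide), pet_dist_one (by decide), pet_dist_two (by decide) (by decide)]
  rcases hx' with rfl | rfl <;> rcases hy' with rfl | rfl
  · exact absurd rfl hxy
  · exact ⟨pc, by exact_mod_cast hcS, Or.inl hgeo⟩
  · exact ⟨pc, by exact_mod_cast hcS, Or.inr hgeo⟩
  · exact absurd rfl hxy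

lemma lower_bound (S : Finset PV) (hS : IsStrongResolvingSet petersenGraph (↑S : Set PV)) :
    8 ≤ S.card := by
  by_contra hlt
  push_neg at hlt
  have key : ∀ x y : PV, x ∉ S → y ∉ S → x ≠ y → Disjoint x.1 y.1 := by
    intro x y hxS hyS hxy
    by_contra hd
    obtain ⟨z, hzS, hz⟩ := hS x y hxy
    rcases hz with hz | hz
    · -- dist y x + dist x z = dist y z
      have h2 : petersenGraph.dist y x = 2 :=
        pet_dist_two hxy.symm (fun h => hd h.symm)
      have hle : petersenGraph.dist y z ≤ 2 := pet_dist_le_two y z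
      have hxz : petersenGraph.dist x z = 0 := by
        unfold LiesOnGeodesic at hz; omega
      exact hxS (pet_dist_zero hxz ▸ hzS)
    · have h2 : petersenGraph.dist x y = 2 := pet_dist_two hxy hd
      have hle : petersenGraph.dist x z ≤ 2 := pet_dist_le_two x z
      have hyz : petersenGraph.dist y z = 0 := by
        unfold LiesOnGeodesic at hz; omega
      exact hyS (pet_dist_zero hyz ▸ hzS)
  have hT : 3 ≤ (Finset.univ \ S).card := by
    have := Finset.card_sdiff_of_subset (Finset.subset_univ S)
    have hu : (Finset.univ : Finset PV).card = 10 := by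
      rw [Finset.card_univ, pv_card]
    omega
  obtain ⟨T3, hsub, hcard⟩ := Finset.exists_subset_card_eq hT
  obtain ⟨a, b, c, hab, hac, hbc, rfl⟩ := Finset.card_eq_three.mp hcard
  have ha : a ∉ S := (Finset.mem_sdiff.mp (hsub (by simp))).2
  have hb : b ∉ S := (Finset.mem_sdiff.mp (hsub (by simp))).2
  have hc : c ∉ S := (Finset.mem_sdiff.mp (hsub (by simp))).2
  exact pv_no_three a b c hab hac hbc
    ⟨key a b ha hb hab, key a c ha hc hac, key b c hb hc hbc⟩

theorem sdim_petersen : sdim petersenGraph = 8 := by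
  have h8 : 8 ∈ {n : ℕ | ∃ S : Finset PV, S.card = n ∧
      IsStrongResolvingSet petersenGraph ↑S} := ⟨S₀, S₀_card, S₀_srs⟩
  refine le_antisymm (Nat.sInf_le h8) (le_csInf ⟨8, h8⟩ ?_)
  rintro m ⟨S, rfl, hS⟩
  exact lower_bound S hS
end

section
/- Let G and H be non-complete graphs, not both disjoint unions of two cliques. Then for vertices (g,h), (g',h') of the modular product G ⋄ H, d((g,h),(g',h')) = 3 if and only if at least one of the following holds: (1) N_G[g] = N_G[g'], d_H(h,h') ≥ 3, and (N_G[g] = V(G) or {h,h'} is a γ_H-pair); (2) the symmetric condition with roles of G and H exchanged. -/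
open SimpleGraph

variable {V : Type*} {W : Type*}

/-- The direct (tensor) product of two graphs. -/
def directProd (G : SimpleGraph V) (H : SimpleGraph W) : SimpleGraph (V × W) where
  Adj x y := G.Adj x.1 y.1 ∧ H.Adj x.2 y.2
  symm := ⟨by rintro x y ⟨h1, h2⟩; exact ⟨h1.symm, h2.symm⟩⟩
  loopless := ⟨by rintro x ⟨h1, -⟩; exact G.loopless.irrefl _ h1⟩

/-- The modular product of two graphs:
`E(G ⋄ H) = E(G □ H) ∪ E(G × H) ∪ E(Ḡ × H̄)`. -/
def modProd (G : SimpleGraph V) (H : SimpleGraph W) : SimpleGraph (V × W) :=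
  (G □ H) ⊔ directProd G H ⊔ directProd Gᶜ Hᶜ

/-- The closed neighborhood of a vertex. -/
def closedNbr (G : SimpleGraph V) (v : V) : Set V :=
  insert v (G.neighborSet v)

/-- `{u, w}` is a `γ`-pair of `G`: their closed neighborhoods are disjoint and
cover all of `G`. -/
def GammaPair (G : SimpleGraph V) (u w : V) : Prop :=
  closedNbr G u ∩ closedNbr G w = ∅ ∧ closedNbr G u ∪ closedNbr G w = Set.univ

/-- `G` is a complete graph. -/
def IsCompleteGr (G : SimpleGraph V) : Prop :=
  ∀ u v : V, u ≠ v → G.Adj u v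

/-- `G` is a disjoint union of two cliques. -/
def IsTwoCliques (G : SimpleGraph V) : Prop :=
  ∃ A : Set V,
    (∀ u ∈ A, ∀ v ∈ A, u ≠ v → G.Adj u v) ∧
    (∀ u ∉ A, ∀ v ∉ A, u ≠ v → G.Adj u v) ∧
    (∀ u ∈ A, ∀ v ∉ A, ¬ G.Adj u v)


section AuxLemmas

variable {G : SimpleGraph V} {H : SimpleGraph W}

lemma mem_closedNbr {u v : V} : u ∈ closedNbr G v ↔ u = v ∨ G.Adj v u := by
  simp [closedNbr]

lemma mem_closedNbr_comm {u v : V} : u ∈ closedNbr G v ↔ v ∈ closedNbr G u := by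
  simp only [mem_closedNbr]
  constructor
  · rintro (rfl | hx)
    · exact Or.inl rfl
    · exact Or.inr hx.symm
  · rintro (rfl | hx)
    · exact Or.inl rfl
    · exact Or.inr hx.symm

lemma not_mem_closedNbr {u v : V} (hu : u ∉ closedNbr G v) : u ≠ v ∧ ¬ G.Adj u v := by
  rw [mem_closedNbr] at hu
  push_neg at hu
  exact ⟨hu.1, fun hx => hu.2 hx.symm⟩

lemma directProd_adj {x y : V × W} :
    (directProd G H).Adj x y ↔ G.Adj x.1 y.1 ∧ H.Adj x.2 y.2 := Iff.rfl

lemma modProd_adj {a c : V} {b d : W} :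
    (modProd G H).Adj (a, b) (c, d) ↔
      (a = c ∧ H.Adj b d) ∨ (b = d ∧ G.Adj a c) ∨ (G.Adj a c ∧ H.Adj b d) ∨
      (a ≠ c ∧ ¬ G.Adj a c ∧ b ≠ d ∧ ¬ H.Adj b d) := by
  simp only [modProd, sup_adj, boxProd_adj, directProd_adj, compl_adj]
  tauto

lemma modProd_adj_swap {a c : V} {b d : W} :
    (modProd G H).Adj (a, b) (c, d) ↔ (modProd H G).Adj (b, a) (d, c) := by
  rw [modProd_adj, modProd_adj]
  tauto

/-- Adjacency in the modular product forces the two coordinates to be on the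
same side of the closed neighborhoods. -/
lemma adj_dichotomy {a c : V} {b d : W}
    (hadj : (modProd G H).Adj (a, b) (c, d)) :
    (a ∈ closedNbr G c ∧ b ∈ closedNbr H d) ∨ (a ∉ closedNbr G c ∧ b ∉ closedNbr H d) := by
  rw [modProd_adj] at hadj
  simp only [mem_closedNbr]
  rcases hadj with ⟨rfl, h2⟩ | ⟨rfl, h2⟩ | ⟨h1, h2⟩ | ⟨h1, h2, h3, h4⟩
  · exact Or.inl ⟨Or.inl rfl, Or.inr h2.symm⟩
  · exact Or.inl ⟨Or.inr h2.symm, Or.inl rfl⟩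
  · exact Or.inl ⟨Or.inr h1.symm, Or.inr h2.symm⟩
  · refine Or.inr ⟨?_, ?_⟩
    · rintro (rfl | hx)
      · exact h1 rfl
      · exact h2 hx.symm
    · rintro (rfl | hx)
      · exact h3 rfl
      · exact h4 hx.symm

lemma walk_length_le_two {h h' : W} (p : H.Walk h h') (hp : p.length ≤ 2) :
    h = h' ∨ H.Adj h h' ∨ ∃ b, H.Adj h b ∧ H.Adj h' b := by
  cases p with
  | nil => exact Or.inl rfl
  | cons h1 q =>
    cases q with
    | nil => exact Or.inr (Or.inl h1)
    | cons h2 r =>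
      cases r with
      | nil => exact Or.inr (Or.inr ⟨_, h1, h2.symm⟩)
      | cons h3 s => simp only [SimpleGraph.Walk.length_cons] at hp; omega

lemma three_le_edist_iff {h h' : W} :
    3 ≤ H.edist h h' ↔ h ≠ h' ∧ ¬ H.Adj h h' ∧ ∀ b, ¬ (H.Adj h b ∧ H.Adj h' b) := by
  constructor
  · intro hle
    refine ⟨?_, ?_, ?_⟩
    · rintro rfl
      rw [SimpleGraph.edist_self] at hle
      exact absurd hle (by norm_num)
    · intro hadj
      rw [← SimpleGraph.edist_eq_one_iff_adj] at hadj
      rw [hadj] at hle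
      exact absurd hle (by norm_num)
    · rintro b ⟨hb1, hb2⟩
      have hw := SimpleGraph.edist_le (SimpleGraph.Walk.cons hb1 (SimpleGraph.Walk.cons hb2.symm SimpleGraph.Walk.nil))
      simp only [SimpleGraph.Walk.length_cons, SimpleGraph.Walk.length_nil] at hw
      have : (3 : ℕ∞) ≤ 2 := le_trans hle (by exact_mod_cast hw)
      exact absurd this (by norm_num)
  · rintro ⟨h1, h2, h3⟩
    by_contra hlt
    push_neg at hlt
    have hne : H.edist h h' ≠ ⊤ := fun ht => by rw [ht] at hlt; exact absurd hlt (by norm_num)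
    obtain ⟨p, hp⟩ := SimpleGraph.exists_walk_of_edist_ne_top hne
    have hplen : p.length ≤ 2 := by
      have : (p.length : ℕ∞) < 3 := by rw [hp]; exact hlt
      have : p.length < 3 := by exact_mod_cast this
      omega
    rcases walk_length_le_two p hplen with rfl | hadj | ⟨b, hb⟩
    · exact h1 rfl
    · exact h2 hadj
    · exact h3 b hb

/-- One-sided forward direction: if the two vertices have no common neighbor. -/
lemma noCommon_forward {g g' : V} {h h' : W}
    (hg : g' ∈ closedNbr G g) (hh : h ≠ h') (hh2 : ¬ H.Adj h h')
    (hnc : ∀ a b, ¬ ((modProd G H).Adj (a, b) (g, h) ∧ (modProd G H).Adj (a, b) (g', h'))) :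
    closedNbr G g = closedNbr G g' ∧ 3 ≤ H.edist h h' ∧
      (closedNbr G g = Set.univ ∨ GammaPair H h h') := by
  have hg2 : g ∈ closedNbr G g' := mem_closedNbr_comm.mp hg
  -- no common neighbor of h, h' in H
  have hcn : ∀ b, ¬ (H.Adj h b ∧ H.Adj h' b) := by
    rintro b ⟨hb1, hb2⟩
    refine hnc g b ⟨modProd_adj.mpr (Or.inl ⟨rfl, hb1.symm⟩), ?_⟩
    rcases mem_closedNbr.mp hg with rfl | hadj
    · exact modProd_adj.mpr (Or.inl ⟨rfl, hb2.symm⟩)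
    · exact modProd_adj.mpr (Or.inr (Or.inr (Or.inl ⟨hadj, hb2.symm⟩)))
  have hNeq : closedNbr G g = closedNbr G g' := by
    ext a
    constructor
    · intro ha
      by_contra ha'
      have h1 : a ≠ g := by
        rintro rfl
        exact ha' hg2
      have h2 : G.Adj g a := (mem_closedNbr.mp ha).resolve_left h1
      obtain ⟨h3, h4⟩ := not_mem_closedNbr ha'
      exact hnc a h ⟨modProd_adj.mpr (Or.inr (Or.inl ⟨rfl, h2.symm⟩)),
        modProd_adj.mpr (Or.inr (Or.inr (Or.inr ⟨h3, h4, hh, hh2⟩)))⟩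
    · intro ha
      by_contra ha'
      have h1 : a ≠ g' := by
        rintro rfl
        exact ha' hg
      have h2 : G.Adj g' a := (mem_closedNbr.mp ha).resolve_left h1
      obtain ⟨h3, h4⟩ := not_mem_closedNbr ha'
      exact hnc a h' ⟨modProd_adj.mpr (Or.inr (Or.inr (Or.inr ⟨h3, h4, hh.symm, fun hx => hh2 hx.symm⟩))),
        modProd_adj.mpr (Or.inr (Or.inl ⟨rfl, h2.symm⟩))⟩
  refine ⟨hNeq, three_le_edist_iff.mpr ⟨hh, hh2, hcn⟩, ?_⟩
  by_cases hu : closedNbr G g = Set.univ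
  · exact Or.inl hu
  · refine Or.inr ⟨?_, ?_⟩
    · ext b
      simp only [Set.mem_inter_iff, Set.mem_empty_iff_false, iff_false, not_and]
      intro hb1 hb2
      rcases mem_closedNbr.mp hb1 with rfl | hb1'
      · rcases mem_closedNbr.mp hb2 with h | h
        · exact hh h
        · exact hh2 h.symm
      · rcases mem_closedNbr.mp hb2 with rfl | hb2'
        · exact hh2 hb1'
        · exact hcn b ⟨hb1', hb2'⟩
    · by_contra hun
      obtain ⟨b, hb⟩ := Set.ne_univ_iff_exists_notMem _ |>.mp hun
      obtain ⟨a, ha⟩ := Set.ne_univ_iff_exists_notMem _ |>.mp hu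
      rw [Set.mem_union] at hb
      push_neg at hb
      obtain ⟨ha1, ha2⟩ := not_mem_closedNbr ha
      obtain ⟨hb1, hb2⟩ := not_mem_closedNbr hb.1
      obtain ⟨hb3, hb4⟩ := not_mem_closedNbr hb.2
      have ha' : a ∉ closedNbr G g' := hNeq ▸ ha
      obtain ⟨ha3, ha4⟩ := not_mem_closedNbr ha'
      exact hnc a b ⟨modProd_adj.mpr (Or.inr (Or.inr (Or.inr ⟨ha1, ha2, hb1, hb2⟩))),
        modProd_adj.mpr (Or.inr (Or.inr (Or.inr ⟨ha3, ha4, hb3, hb4⟩)))⟩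

/-- One-sided backward direction: no common neighbors. -/
lemma noCommon_backward {g g' : V} {h h' : W}
    (h1 : closedNbr G g = closedNbr G g')
    (h2 : 3 ≤ H.edist h h')
    (h3 : closedNbr G g = Set.univ ∨ GammaPair H h h') :
    ∀ a b, ¬ ((modProd G H).Adj (a, b) (g, h) ∧ (modProd G H).Adj (a, b) (g', h')) := by
  obtain ⟨hne, hnadj, hcn⟩ := three_le_edist_iff.mp h2
  rintro a b ⟨hx, hy⟩
  rcases adj_dichotomy hx with ⟨ha, hb⟩ | ⟨ha, hb⟩
  · rcases adj_dichotomy hy with ⟨ha', hb'⟩ | ⟨ha', hb'⟩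
    · rcases mem_closedNbr.mp hb with rfl | hb1
      · rcases mem_closedNbr.mp hb' with h | h
        · exact hne h
        · exact hnadj h.symm
      · rcases mem_closedNbr.mp hb' with rfl | hb2
        · exact hnadj hb1
        · exact hcn b ⟨hb1, hb2⟩
    · exact ha' (h1 ▸ ha)
  · rcases adj_dichotomy hy with ⟨ha', hb'⟩ | ⟨ha', hb'⟩
    · exact ha (h1 ▸ ha')
    · rcases h3 with hu | ⟨_, hun⟩
      · exact ha (hu ▸ Set.mem_univ a)
      · have : b ∈ closedNbr H h ∪ closedNbr H h' := hun ▸ Set.mem_univ b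
        rcases this with hc | hc
        · exact hb hc
        · exact hb' hc

lemma not_adj_of {g g' : V} {h h' : W}
    (h1 : closedNbr G g = closedNbr G g') (hne : h ≠ h') (hnadj : ¬ H.Adj h h') :
    ¬ (modProd G H).Adj (g, h) (g', h') := by
  intro hadj
  have hg : g' ∈ closedNbr G g := h1 ▸ mem_closedNbr.mpr (Or.inl rfl)
  rcases modProd_adj.mp hadj with ⟨_, hx⟩ | ⟨hx, _⟩ | ⟨_, hx⟩ | ⟨hx1, hx2, _, _⟩
  · exact hnadj hx
  · exact hne hx
  · exact hnadj hx
  · rcases mem_closedNbr.mp hg with h | h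
    · exact hx1 h.symm
    · exact hx2 h

/-- Existence of a 3-chain between the two vertices, under the theorem's hypotheses. -/
lemma chain_exists {g g' : V} {h h' : W}
    (hGnc : ¬ IsCompleteGr G) (hnb : ¬ (IsTwoCliques G ∧ IsTwoCliques H))
    (h1 : closedNbr G g = closedNbr G g')
    (hne : h ≠ h') (hnadj : ¬ H.Adj h h') (hcn : ∀ b, ¬ (H.Adj h b ∧ H.Adj h' b))
    (h3 : closedNbr G g = Set.univ ∨ GammaPair H h h') :
    ∃ p q : V × W, (modProd G H).Adj (g, h) p ∧ (modProd G H).Adj p q ∧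
      (modProd G H).Adj q (g', h') := by
  have hg : g' ∈ closedNbr G g := h1 ▸ mem_closedNbr.mpr (Or.inl rfl)
  by_cases hu : closedNbr G g = Set.univ
  · -- both g and g' are universal vertices; use a non-adjacent pair in G
    have hu' : closedNbr G g' = Set.univ := h1 ▸ hu
    simp only [IsCompleteGr] at hGnc
    push_neg at hGnc
    obtain ⟨p, q, hpq, hnpq⟩ := hGnc
    have hpg : p ≠ g := by
      rintro rfl
      rcases mem_closedNbr.mp (hu ▸ Set.mem_univ q) with h | h
      · exact hpq h.symm
      · exact hnpq h
    have hgp : G.Adj g p := (mem_closedNbr.mp (hu ▸ Set.mem_univ p)).resolve_left hpg |>.symm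
      |>.symm
    have hqg' : q ≠ g' := by
      rintro rfl
      rcases mem_closedNbr.mp (hu' ▸ Set.mem_univ p) with h | h
      · exact hpq h
      · exact hnpq h.symm
    have hgq : G.Adj g' q := (mem_closedNbr.mp (hu' ▸ Set.mem_univ q)).resolve_left hqg'
    refine ⟨(p, h), (q, h'), ?_, ?_, ?_⟩
    · exact modProd_adj.mpr (Or.inr (Or.inl ⟨rfl, hgp⟩))
    · exact modProd_adj.mpr (Or.inr (Or.inr (Or.inr ⟨hpq, hnpq, hne, hnadj⟩)))
    · exact modProd_adj.mpr (Or.inr (Or.inl ⟨rfl, hgq.symm⟩))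
  · have hgp : GammaPair H h h' := h3.resolve_left hu
    obtain ⟨hint, huni⟩ := hgp
    have hdisj : ∀ b, b ∈ closedNbr H h → b ∉ closedNbr H h' := by
      intro b hb hb'
      have : b ∈ closedNbr H h ∩ closedNbr H h' := ⟨hb, hb'⟩
      rw [hint] at this
      exact this
    obtain ⟨a, ha⟩ := Set.ne_univ_iff_exists_notMem _ |>.mp hu
    obtain ⟨ha1, ha2⟩ := not_mem_closedNbr ha
    have ha' : a ∉ closedNbr G g' := h1 ▸ ha
    obtain ⟨ha3, ha4⟩ := not_mem_closedNbr ha'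
    by_cases hcross : ∃ b b', b ∈ closedNbr H h ∧ b' ∈ closedNbr H h' ∧ H.Adj b b'
    · obtain ⟨b, b', hb, hb', hbb⟩ := hcross
      have hbh : H.Adj h b := by
        rcases mem_closedNbr.mp hb with rfl | hx
        · exact absurd (mem_closedNbr.mpr (Or.inr hbb)) (fun hc => hdisj b' hc hb')
        · exact hx
      have hb'h' : H.Adj h' b' := by
        rcases mem_closedNbr.mp hb' with rfl | hx
        · exact absurd hb (fun hc => hdisj b hc (mem_closedNbr.mpr (Or.inr hbb.symm)))
        · exact hx
      refine ⟨(g, b), (g', b'), ?_, ?_, ?_⟩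
      · exact modProd_adj.mpr (Or.inl ⟨rfl, hbh⟩)
      · rcases mem_closedNbr.mp hg with h | h
        · exact modProd_adj.mpr (Or.inl ⟨h.symm, hbb⟩)
        · exact modProd_adj.mpr (Or.inr (Or.inr (Or.inl ⟨h, hbb⟩)))
      · exact modProd_adj.mpr (Or.inl ⟨rfl, hb'h'.symm⟩)
    · push_neg at hcross
      by_cases hA : ∃ b1 b2, b1 ∈ closedNbr H h ∧ b2 ∈ closedNbr H h ∧ b1 ≠ b2 ∧ ¬ H.Adj b1 b2
      · obtain ⟨b1, b2, hb1, hb2, hbne, hbnadj⟩ := hA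
        have hhb1 : H.Adj h b1 := by
          rcases mem_closedNbr.mp hb1 with rfl | hx
          · rcases mem_closedNbr.mp hb2 with h | h
            · exact absurd h.symm hbne
            · exact absurd h hbnadj
          · exact hx
        have hb2h' : b2 ∉ closedNbr H h' := hdisj b2 hb2
        obtain ⟨hb2h'1, hb2h'2⟩ := not_mem_closedNbr hb2h'
        refine ⟨(g, b1), (a, b2), ?_, ?_, ?_⟩
        · exact modProd_adj.mpr (Or.inl ⟨rfl, hhb1⟩)
        · exact modProd_adj.mpr (Or.inr (Or.inr (Or.inr ⟨Ne.symm ha1, fun hx => ha2 hx.symm, hbne, hbnadj⟩)))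
        · exact modProd_adj.mpr (Or.inr (Or.inr (Or.inr ⟨ha3, ha4, hb2h'1, hb2h'2⟩)))
      · by_cases hB : ∃ b1 b2, b1 ∈ closedNbr H h' ∧ b2 ∈ closedNbr H h' ∧ b1 ≠ b2 ∧ ¬ H.Adj b1 b2
        · obtain ⟨b1, b2, hb1, hb2, hbne, hbnadj⟩ := hB
          have hh'b1 : H.Adj h' b1 := by
            rcases mem_closedNbr.mp hb1 with rfl | hx
            · rcases mem_closedNbr.mp hb2 with h | h
              · exact absurd h.symm hbne
              · exact absurd h hbnadj
            · exact hx
          have hb2h : b2 ∉ closedNbr H h := by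
            intro hc
            exact hdisj b2 hc hb2
          obtain ⟨hb2h1, hb2h2⟩ := not_mem_closedNbr hb2h
          refine ⟨(a, b2), (g', b1), ?_, ?_, ?_⟩
          · exact modProd_adj.mpr (Or.inr (Or.inr (Or.inr ⟨Ne.symm ha1, fun hx => ha2 hx.symm, Ne.symm hb2h1, fun hx => hb2h2 hx.symm⟩)))
          · exact modProd_adj.mpr (Or.inr (Or.inr (Or.inr ⟨ha3, ha4, hbne.symm, fun hx => hbnadj hx.symm⟩)))
          · exact modProd_adj.mpr (Or.inl ⟨rfl, hh'b1.symm⟩)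
        · -- H is a disjoint union of two cliques; so G is not
          push_neg at hA hB
          have hHtwo : IsTwoCliques H := by
            refine ⟨closedNbr H h, ?_, ?_, ?_⟩
            · intro u hu v hv huv
              exact hA u v hu hv huv
            · intro u hu v hv huv
              have hu' : u ∈ closedNbr H h' := by
                have := huni ▸ Set.mem_univ u
                rcases (Set.mem_union u _ _).mp this with h | h
                · exact absurd h hu
                · exact h
              have hv' : v ∈ closedNbr H h' := by
                have := huni ▸ Set.mem_univ v
                rcases (Set.mem_union v _ _).mp this with h | h
                · exact absurd h hv
                · exact h
              exact hB u v hu' hv' huv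
            · intro u hu v hv
              have hv' : v ∈ closedNbr H h' := by
                have := huni ▸ Set.mem_univ v
                rcases (Set.mem_union v _ _).mp this with h | h
                · exact absurd h hv
                · exact h
              exact hcross u v hu hv'
          have hGnt : ¬ IsTwoCliques G := fun hc => hnb ⟨hc, hHtwo⟩
          have hGnA : ¬ ((∀ u ∈ closedNbr G g, ∀ v ∈ closedNbr G g, u ≠ v → G.Adj u v) ∧
              (∀ u ∉ closedNbr G g, ∀ v ∉ closedNbr G g, u ≠ v → G.Adj u v) ∧
              (∀ u ∈ closedNbr G g, ∀ v ∉ closedNbr G g, ¬ G.Adj u v)) := by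
            intro hc
            exact hGnt ⟨closedNbr G g, hc.1, hc.2.1, hc.2.2⟩
          by_cases hc1 : ∃ u v, u ∈ closedNbr G g ∧ v ∈ closedNbr G g ∧ u ≠ v ∧ ¬ G.Adj u v
          · obtain ⟨u, v, hu, hv, huv, hnuv⟩ := hc1
            have hgu : G.Adj g u := by
              rcases mem_closedNbr.mp hu with rfl | hx
              · rcases mem_closedNbr.mp hv with h | h
                · exact absurd h.symm huv
                · exact absurd h hnuv
              · exact hx
            have hvg' : G.Adj g' v := by
              have hv' : v ∈ closedNbr G g' := h1 ▸ hv
              rcases mem_closedNbr.mp hv' with hveq | hx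
              · exfalso
                have hu' : u ∈ closedNbr G g' := h1 ▸ hu
                rcases mem_closedNbr.mp hu' with hueq | hadj
                · exact huv (hueq.trans hveq.symm)
                · exact hnuv ((hveq.symm ▸ hadj : G.Adj v u)).symm
              · exact hx
            refine ⟨(u, h), (v, h'), ?_, ?_, ?_⟩
            · exact modProd_adj.mpr (Or.inr (Or.inl ⟨rfl, hgu⟩))
            · exact modProd_adj.mpr (Or.inr (Or.inr (Or.inr ⟨huv, hnuv, hne, hnadj⟩)))
            · exact modProd_adj.mpr (Or.inr (Or.inl ⟨rfl, hvg'.symm⟩))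
          · by_cases hc2 : ∃ u v, u ∉ closedNbr G g ∧ v ∉ closedNbr G g ∧ u ≠ v ∧ ¬ G.Adj u v
            · obtain ⟨u, v, hu, hv, huv, hnuv⟩ := hc2
              obtain ⟨hu1, hu2⟩ := not_mem_closedNbr hu
              obtain ⟨hv1, hv2⟩ := not_mem_closedNbr hv
              have hv' : v ∉ closedNbr G g' := h1 ▸ hv
              obtain ⟨hv3, hv4⟩ := not_mem_closedNbr hv'
              refine ⟨(u, h'), (v, h), ?_, ?_, ?_⟩
              · exact modProd_adj.mpr (Or.inr (Or.inr (Or.inr ⟨Ne.symm hu1, fun hx => hu2 hx.symm, hne, hnadj⟩)))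
              · exact modProd_adj.mpr (Or.inr (Or.inr (Or.inr ⟨huv, hnuv, hne.symm, fun hx => hnadj hx.symm⟩)))
              · exact modProd_adj.mpr (Or.inr (Or.inr (Or.inr ⟨hv3, hv4, hne, hnadj⟩)))
            · -- there must be a cross edge in G
              push_neg at hc1 hc2
              have hc3 : ∃ u ∈ closedNbr G g, ∃ v ∉ closedNbr G g, G.Adj u v := by
                by_contra hc
                push_neg at hc
                exact hGnA ⟨fun u hu v hv huv => hc1 u v hu hv huv,
                  fun u hu v hv huv => hc2 u v hu hv huv,
                  fun u hu v hv => hc u hu v hv⟩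
              obtain ⟨u, hu, v, hv, huv⟩ := hc3
              have hgu : G.Adj g u := by
                rcases mem_closedNbr.mp hu with rfl | hx
                · exact absurd (mem_closedNbr.mpr (Or.inr huv)) hv
                · exact hx
              have hv' : v ∉ closedNbr G g' := h1 ▸ hv
              obtain ⟨hv3, hv4⟩ := not_mem_closedNbr hv'
              refine ⟨(u, h), (v, h), ?_, ?_, ?_⟩
              · exact modProd_adj.mpr (Or.inr (Or.inl ⟨rfl, hgu⟩))
              · exact modProd_adj.mpr (Or.inr (Or.inl ⟨rfl, huv⟩))
              · exact modProd_adj.mpr (Or.inr (Or.inr (Or.inr ⟨hv3, hv4, hne, hnadj⟩)))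

lemma common_of_dist_two {U : Type*} {G' : SimpleGraph U} {x y : U}
    (hd : G'.dist x y = 2) : ∃ z, G'.Adj x z ∧ G'.Adj z y := by
  obtain ⟨p, hp⟩ := SimpleGraph.exists_walk_of_dist_ne_zero (by rw [hd]; norm_num)
  rw [hd] at hp
  cases p with
  | nil => simp at hp
  | cons e1 q =>
    cases q with
    | nil => simp at hp
    | cons e2 r =>
      cases r with
      | nil => exact ⟨_, e1, e2⟩
      | cons e3 s => simp [SimpleGraph.Walk.length_cons] at hp

lemma dist_eq_three_of {U : Type*} {G' : SimpleGraph U} {x y : U}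
    (hxy : x ≠ y) (hna : ¬ G'.Adj x y)
    (hnc : ∀ z, ¬ (G'.Adj x z ∧ G'.Adj z y))
    {p q : U} (e1 : G'.Adj x p) (e2 : G'.Adj p q) (e3 : G'.Adj q y) :
    G'.dist x y = 3 := by
  let w : G'.Walk x y := SimpleGraph.Walk.cons e1 (SimpleGraph.Walk.cons e2
    (SimpleGraph.Walk.cons e3 SimpleGraph.Walk.nil))
  have hle : G'.dist x y ≤ 3 := by
    have := SimpleGraph.dist_le w
    simpa [w] using this
  have h0 : G'.dist x y ≠ 0 := by
    rw [ne_eq, SimpleGraph.dist_eq_zero_iff_eq_or_not_reachable]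
    push_neg
    exact ⟨hxy, ⟨w⟩⟩
  have h1 : G'.dist x y ≠ 1 := fun e => hna (SimpleGraph.dist_eq_one_iff_adj.mp e)
  have h2 : G'.dist x y ≠ 2 := by
    intro e
    obtain ⟨z, hz⟩ := common_of_dist_two e
    exact hnc z hz
  omega

lemma triple_of_dist_three {U : Type*} {G' : SimpleGraph U} {x y : U}
    (hd : G'.dist x y = 3) :
    x ≠ y ∧ ¬ G'.Adj x y ∧ ∀ z, ¬ (G'.Adj x z ∧ G'.Adj z y) := by
  refine ⟨?_, ?_, ?_⟩
  · rintro rfl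
    rw [SimpleGraph.dist_self] at hd
    omega
  · intro hadj
    rw [← SimpleGraph.dist_eq_one_iff_adj] at hadj
    omega
  · rintro z ⟨hz1, hz2⟩
    have := SimpleGraph.dist_le (SimpleGraph.Walk.cons hz1 (SimpleGraph.Walk.cons hz2 SimpleGraph.Walk.nil))
    simp only [SimpleGraph.Walk.length_cons, SimpleGraph.Walk.length_nil] at this
    omega

end AuxLemmas

theorem modProd_dist_eq_three_iff [Fintype V] [Fintype W]
    (G : SimpleGraph V) (H : SimpleGraph W)
    (hGnc : ¬ IsCompleteGr G) (hHnc : ¬ IsCompleteGr H)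
    (hnb : ¬ (IsTwoCliques G ∧ IsTwoCliques H)) :
    ∀ (g g' : V) (h h' : W),
      (modProd G H).dist (g, h) (g', h') = 3 ↔
      ((closedNbr G g = closedNbr G g' ∧ 3 ≤ H.edist h h' ∧
          (closedNbr G g = Set.univ ∨ GammaPair H h h')) ∨
        (closedNbr H h = closedNbr H h' ∧ 3 ≤ G.edist g g' ∧
          (closedNbr H h = Set.univ ∨ GammaPair G g g'))) := by
  intro g g' h h'
  constructor
  · intro hd
    obtain ⟨hneq, hnadj, hnc0⟩ := triple_of_dist_three hd
    have hnc : ∀ a b, ¬ ((modProd G H).Adj (a, b) (g, h) ∧ (modProd G H).Adj (a, b) (g', h')) := by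
      rintro a b ⟨u1, u2⟩
      exact hnc0 (a, b) ⟨u1.symm, u2⟩
    have hneq' : ¬ (g = g' ∧ h = h') := by
      intro hc
      exact hneq (Prod.ext hc.1 hc.2)
    have key : (g' ∈ closedNbr G g ∧ h ≠ h' ∧ ¬ H.Adj h h') ∨
        (h' ∈ closedNbr H h ∧ g ≠ g' ∧ ¬ G.Adj g g') := by
      by_cases e3 : G.Adj g g'
      · by_cases e4 : H.Adj h h'
        · exact absurd (modProd_adj.mpr (Or.inr (Or.inr (Or.inl ⟨e3, e4⟩)))) hnadj
        · refine Or.inl ⟨mem_closedNbr.mpr (Or.inr e3), ?_, e4⟩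
          rintro rfl
          exact hnadj (modProd_adj.mpr (Or.inr (Or.inl ⟨rfl, e3⟩)))
      · by_cases e4 : H.Adj h h'
        · refine Or.inr ⟨mem_closedNbr.mpr (Or.inr e4), ?_, e3⟩
          rintro rfl
          exact hnadj (modProd_adj.mpr (Or.inl ⟨rfl, e4⟩))
        · by_cases e1 : g = g'
          · subst e1
            refine Or.inl ⟨mem_closedNbr.mpr (Or.inl rfl), ?_, e4⟩
            intro hc
            exact hneq' ⟨rfl, hc⟩
          · by_cases e2 : h = h'
            · subst e2
              exact Or.inr ⟨mem_closedNbr.mpr (Or.inl rfl), e1, e3⟩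
            · exact absurd (modProd_adj.mpr (Or.inr (Or.inr (Or.inr ⟨e1, e3, e2, e4⟩)))) hnadj
    rcases key with ⟨hg, hh, hh2⟩ | ⟨hh, hg, hg2⟩
    · exact Or.inl (noCommon_forward hg hh hh2 hnc)
    · refine Or.inr (noCommon_forward (G := H) (H := G) hh hg hg2 ?_)
      rintro b a ⟨u1, u2⟩
      exact hnc a b ⟨modProd_adj_swap.mpr u1, modProd_adj_swap.mpr u2⟩
  · rintro (⟨hN, hed, hor⟩ | ⟨hN, hed, hor⟩)
    · obtain ⟨hne, hnadj2, hcn⟩ := three_le_edist_iff.mp hed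
      have hnc := noCommon_backward hN hed hor
      obtain ⟨p, q, e1, e2, e3⟩ := chain_exists hGnc hnb hN hne hnadj2 hcn hor
      refine dist_eq_three_of ?_ (not_adj_of hN hne hnadj2) ?_ e1 e2 e3
      · intro hc
        exact hne (congrArg Prod.snd hc)
      · rintro z ⟨u1, u2⟩
        exact hnc z.1 z.2 ⟨u1.symm, u2⟩
    · obtain ⟨hne, hnadj2, hcn⟩ := three_le_edist_iff.mp hed
      have hnb' : ¬ (IsTwoCliques H ∧ IsTwoCliques G) := fun hc => hnb ⟨hc.2, hc.1⟩
      have hnc := noCommon_backward (G := H) (H := G) hN hed hor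
      obtain ⟨p, q, e1, e2, e3⟩ := chain_exists (G := H) (H := G) hHnc hnb' hN hne hnadj2 hcn hor
      have e1' : (modProd G H).Adj (g, h) (p.2, p.1) := by
        rw [modProd_adj_swap]
        simpa using e1
      have e2' : (modProd G H).Adj (p.2, p.1) (q.2, q.1) := by
        rw [modProd_adj_swap]
        simpa using e2
      have e3' : (modProd G H).Adj (q.2, q.1) (g', h') := by
        rw [modProd_adj_swap]
        simpa using e3
      have hna : ¬ (modProd G H).Adj (g, h) (g', h') := by
        intro hc
        exact not_adj_of (G := H) (H := G) hN hne hnadj2 (modProd_adj_swap.mp hc)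
      refine dist_eq_three_of ?_ hna ?_ e1' e2' e3'
      · intro hc
        exact hne (congrArg Prod.fst hc)
      · rintro z ⟨u1, u2⟩
        exact hnc z.2 z.1 ⟨modProd_adj_swap.mp (show (modProd G H).Adj (z.1, z.2) (g, h) by simpa using u1.symm),
          modProd_adj_swap.mp (show (modProd G H).Adj (z.1, z.2) (g', h') by simpa using u2)⟩
end
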